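/- arXiv:1403.7414 — 2 statements merged into one kernel-verified Lean document; each statement's English description precedes it below -/
import Mathlib

section
/- Let N ≥ 3, λ > 0, C > 0, and define u_λ : ℝ^N → ℝ by u_λ(x) = C (λ/(λ² + |x|²))^{N/2}. Then ∫_{ℝ^N} |∇u_λ(x)|² dx = (N²(N-2)/(4(N+1))) · ∫_{ℝ^N} |u_λ(x)|²/|x|² dx. -/
set_option maxHeartbeats 1000000

open MeasureTheory Set Filter Real Topology

private lemma den_pos' {lam : ℝ} (hlam : 0 < lam) (r : ℝ) : 0 < lam ^ 2 + r ^ 2 :=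
  add_pos_of_pos_of_nonneg (pow_pos hlam 2) (sq_nonneg r)

private lemma grad_norm_sq {N : ℕ} {lam C : ℝ} (hlam : 0 < lam)
    (u : EuclideanSpace ℝ (Fin N) → ℝ)
    (hu : ∀ x, u x = C * (lam / (lam ^ 2 + ‖x‖ ^ 2)) ^ ((N : ℝ) / 2))
    (x : EuclideanSpace ℝ (Fin N)) :
    ‖gradient u x‖ ^ 2
      = C ^ 2 * (N : ℝ) ^ 2 * lam ^ N * (‖x‖ ^ 2 * ((lam ^ 2 + ‖x‖ ^ 2)⁻¹) ^ (N + 2)) := by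
  set p : ℝ := (N : ℝ) / 2 with hp
  have hs : 0 < lam ^ 2 + ‖x‖ ^ 2 := den_pos' hlam _
  have hufun : u = fun y : EuclideanSpace ℝ (Fin N) =>
      C * lam ^ p * ((lam ^ 2 + ‖y‖ ^ 2) ^ (-p)) := by
    funext y
    have hsy : 0 < lam ^ 2 + ‖y‖ ^ 2 := den_pos' hlam _
    rw [hu y, Real.div_rpow hlam.le hsy.le, Real.rpow_neg hsy.le, div_eq_mul_inv, mul_assoc]
  have h2 : HasDerivAt (fun t : ℝ => lam ^ 2 + t) 1 (‖x‖ ^ 2) := (hasDerivAt_id _).const_add _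
  have h3 : HasDerivAt (fun t : ℝ => (lam ^ 2 + t) ^ (-p))
      (1 * -p * (lam ^ 2 + ‖x‖ ^ 2) ^ (-p - 1)) (‖x‖ ^ 2) := h2.rpow_const (Or.inl hs.ne')
  have h4 := h3.const_mul (C * lam ^ p)
  have hn : HasFDerivAt (fun y : EuclideanSpace ℝ (Fin N) => ‖y‖ ^ 2)
      ((2 : ℕ) • (innerSL ℝ x)) x := (hasStrictFDerivAt_norm_sq x).hasFDerivAt
  have hcomp := h4.comp_hasFDerivAt x hn
  set c : ℝ := C * lam ^ p * (1 * -p * (lam ^ 2 + ‖x‖ ^ 2) ^ (-p - 1)) with hc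
  have hdual : (InnerProductSpace.toDual ℝ (EuclideanSpace ℝ (Fin N))) ((2 * c) • x)
      = c • ((2 : ℕ) • (innerSL ℝ x)) := by
    refine ContinuousLinearMap.ext fun y => ?_
    simp [real_inner_smul_left, two_smul]
    ring
  have hgrad : HasGradientAt u ((2 * c) • x) x := by
    rw [hufun, hasGradientAt_iff_hasFDerivAt, hdual]
    exact hcomp
  rw [hgrad.gradient, norm_smul, mul_pow, Real.norm_eq_abs, sq_abs]
  have hlamp : (lam ^ p) ^ (2 : ℕ) = lam ^ N := by
    rw [← Real.rpow_natCast (lam ^ p) 2, ← Real.rpow_mul hlam.le,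
      show p * (2 : ℕ) = ((N : ℕ) : ℝ) by rw [hp]; push_cast; ring, Real.rpow_natCast]
  have hsp : ((lam ^ 2 + ‖x‖ ^ 2) ^ (-p - 1)) ^ (2 : ℕ)
      = ((lam ^ 2 + ‖x‖ ^ 2)⁻¹) ^ (N + 2) := by
    rw [← Real.rpow_natCast ((lam ^ 2 + ‖x‖ ^ 2) ^ (-p - 1)) 2, ← Real.rpow_mul hs.le,
      show (-p - 1) * (2 : ℕ) = -(((N + 2 : ℕ) : ℝ)) by rw [hp]; push_cast; ring,
      Real.rpow_neg hs.le, Real.rpow_natCast, inv_pow]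
  have hc2 : (2 * c) ^ 2
      = C ^ 2 * (N : ℝ) ^ 2 * lam ^ N * ((lam ^ 2 + ‖x‖ ^ 2)⁻¹) ^ (N + 2) := by
    have hp2 : p ^ 2 = (N : ℝ) ^ 2 / 4 := by rw [hp]; ring
    calc (2 * c) ^ 2
        = 4 * (C ^ 2 * ((lam ^ p) ^ (2:ℕ) *
            (p ^ 2 * (((lam ^ 2 + ‖x‖ ^ 2) ^ (-p - 1)) ^ (2:ℕ))))) := by rw [hc]; ring
      _ = _ := by rw [hlamp, hsp, hp2]; ring
  rw [hc2]; ring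

open MeasureTheory Set Filter Real Topology

private lemma den_pos {lam : ℝ} (hlam : 0 < lam) (r : ℝ) : 0 < lam ^ 2 + r ^ 2 :=
  add_pos_of_pos_of_nonneg (pow_pos hlam 2) (sq_nonneg r)

private lemma my_cont {lam : ℝ} (hlam : 0 < lam) (a b : ℕ) :
    Continuous fun r : ℝ => r ^ a * ((lam ^ 2 + r ^ 2)⁻¹) ^ b :=
  (continuous_pow a).mul
    (((continuous_const.add (continuous_pow 2)).inv₀ fun r => (den_pos hlam r).ne').pow b)

private lemma my_integrable {lam : ℝ} (hlam : 0 < lam) (a b : ℕ) (hab : a + 2 ≤ 2 * b) :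
    IntegrableOn (fun r : ℝ => r ^ a * ((lam ^ 2 + r ^ 2)⁻¹) ^ b) (Ioi 0) := by
  have hcont := my_cont hlam a b
  have h1 : IntegrableOn (fun r : ℝ => r ^ a * ((lam ^ 2 + r ^ 2)⁻¹) ^ b) (Ioc 0 1) :=
    hcont.integrableOn_Ioc
  have h2 : IntegrableOn (fun r : ℝ => r ^ a * ((lam ^ 2 + r ^ 2)⁻¹) ^ b) (Ioi 1) := by
    have hi := integrableOn_Ioi_rpow_of_lt (show (-2 : ℝ) < -1 by norm_num) one_pos
    refine hi.mono' hcont.aestronglyMeasurable.restrict ?_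
    filter_upwards [ae_restrict_mem measurableSet_Ioi] with r hr
    have hr1 : (1 : ℝ) ≤ r := le_of_lt hr
    have hr0 : (0 : ℝ) < r := lt_of_lt_of_le one_pos hr1
    have hs := den_pos hlam r
    have hnn : 0 ≤ r ^ a * ((lam ^ 2 + r ^ 2)⁻¹) ^ b :=
      mul_nonneg (pow_nonneg hr0.le a) (pow_nonneg (inv_nonneg.2 hs.le) b)
    rw [Real.norm_eq_abs, abs_of_nonneg hnn,
      show (-2 : ℝ) = -((2 : ℕ) : ℝ) by norm_num, Real.rpow_neg hr0.le, Real.rpow_natCast]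
    rw [inv_pow, mul_inv_le_iff₀ (pow_pos hs b), ← one_div, div_mul_eq_mul_div,
      le_div_iff₀ (pow_pos hr0 2), one_mul]
    calc r ^ a * r ^ 2 = r ^ (a + 2) := (pow_add r a 2).symm
      _ ≤ r ^ (2 * b) := pow_le_pow_right₀ hr1 hab
      _ = (r ^ 2) ^ b := by rw [pow_mul]
      _ ≤ (lam ^ 2 + r ^ 2) ^ b :=
          pow_le_pow_left₀ (sq_nonneg r) (le_add_of_nonneg_left (sq_nonneg lam)) b
  have h := h1.union h2
  rwa [Ioc_union_Ioi_eq_Ioi (by norm_num : (0 : ℝ) ≤ 1)] at h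

private lemma my_ibp {lam : ℝ} (hlam : 0 < lam) (a b : ℕ) (hab : a + 2 ≤ 2 * b) :
    ∫ r in Ioi (0 : ℝ), r ^ (a + 2) * ((lam ^ 2 + r ^ 2)⁻¹) ^ (b + 1)
      = ((a : ℝ) + 1) / (2 * b) * ∫ r in Ioi (0 : ℝ), r ^ a * ((lam ^ 2 + r ^ 2)⁻¹) ^ b := by
  obtain ⟨c, rfl⟩ : ∃ c, b = c + 1 := ⟨b - 1, by omega⟩
  set F : ℝ → ℝ := fun r => r ^ (a + 1) * ((lam ^ 2 + r ^ 2)⁻¹) ^ (c + 1) with hF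
  set F' : ℝ → ℝ := fun r =>
    ((a : ℝ) + 1) * (r ^ a * ((lam ^ 2 + r ^ 2)⁻¹) ^ (c + 1))
      - (2 * ((c : ℝ) + 1)) * (r ^ (a + 2) * ((lam ^ 2 + r ^ 2)⁻¹) ^ (c + 2)) with hF'
  have hg := my_integrable hlam a (c + 1) hab
  have hh := my_integrable hlam (a + 2) (c + 2) (by omega)
  have hderiv : ∀ r ∈ Ioi (0 : ℝ), HasDerivAt F (F' r) r := by
    intro r _
    have hs := den_pos hlam r
    have h1 : HasDerivAt (fun r : ℝ => r ^ (a + 1)) (((a : ℝ) + 1) * r ^ a) r := by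
      simpa using hasDerivAt_pow (a + 1) r
    have h2 : HasDerivAt (fun r : ℝ => lam ^ 2 + r ^ 2) (2 * r) r := by
      simpa using (hasDerivAt_pow 2 r).const_add (lam ^ 2)
    have h3 : HasDerivAt (fun r : ℝ => (lam ^ 2 + r ^ 2) ^ (c + 1))
        ((((c : ℝ) + 1)) * (lam ^ 2 + r ^ 2) ^ c * (2 * r)) r := by
      simpa [Function.comp_def] using (hasDerivAt_pow (c + 1) _).comp r h2
    have h4 := h1.mul (h3.inv (by positivity))
    have hFeq : F = fun r : ℝ => r ^ (a + 1) * ((lam ^ 2 + r ^ 2) ^ (c + 1))⁻¹ :=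
      funext fun r => by simp [hF, inv_pow]
    rw [hFeq]
    refine h4.congr_deriv ?_
    simp only [hF', inv_pow, Pi.inv_apply]
    field_simp
    ring
  have hint : IntegrableOn F' (Ioi 0) := (hg.const_mul _).sub (hh.const_mul _)
  have hcontF : ContinuousWithinAt F (Ici 0) 0 :=
    (my_cont hlam (a + 1) (c + 1)).continuousWithinAt
  have htend : Tendsto F atTop (𝓝 0) := by
    set k : ℕ := 2 * c + 1 - a with hk
    have hk0 : k ≠ 0 := by omega
    have hak : a + 1 + k = 2 * (c + 1) := by omega
    apply squeeze_zero' (g := fun r : ℝ => (r ^ k)⁻¹)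
    · filter_upwards [eventually_ge_atTop (1 : ℝ)] with r hr1
      have hr0 : (0 : ℝ) < r := lt_of_lt_of_le one_pos hr1
      exact mul_nonneg (pow_nonneg hr0.le _) (pow_nonneg (inv_nonneg.2 (den_pos hlam r).le) _)
    · filter_upwards [eventually_ge_atTop (1 : ℝ)] with r hr1
      have hr0 : (0 : ℝ) < r := lt_of_lt_of_le one_pos hr1
      have hs := den_pos hlam r
      have hle : ((lam ^ 2 + r ^ 2)⁻¹) ^ (c + 1) ≤ ((r ^ 2)⁻¹) ^ (c + 1) :=
        pow_le_pow_left₀ (inv_nonneg.2 hs.le)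
          (inv_anti₀ (pow_pos hr0 2) (le_add_of_nonneg_left (sq_nonneg lam))) _
      have heq : r ^ (a + 1) * ((r ^ 2)⁻¹) ^ (c + 1) = (r ^ k)⁻¹ := by
        rw [inv_pow, ← pow_mul, ← hak, pow_add]
        field_simp
        ring
      calc F r ≤ r ^ (a + 1) * ((r ^ 2)⁻¹) ^ (c + 1) :=
            mul_le_mul_of_nonneg_left hle (pow_nonneg hr0.le _)
        _ = (r ^ k)⁻¹ := heq
    · exact (tendsto_pow_atTop hk0).inv_tendsto_atTop
  have key := integral_Ioi_of_hasDerivAt_of_tendsto hcontF hderiv hint htend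
  have hF0 : F 0 = 0 := by simp [hF]
  rw [hF0, sub_zero] at key
  have hsplit : ∫ r in Ioi (0:ℝ), F' r
      = ((a : ℝ) + 1) * (∫ r in Ioi (0:ℝ), r ^ a * ((lam ^ 2 + r ^ 2)⁻¹) ^ (c + 1))
        - (2 * ((c : ℝ) + 1)) *
          ∫ r in Ioi (0:ℝ), r ^ (a + 2) * ((lam ^ 2 + r ^ 2)⁻¹) ^ (c + 2) := by
    simp only [hF']
    rw [integral_sub (hg.const_mul _) (hh.const_mul _), integral_const_mul, integral_const_mul]
  rw [hsplit] at key
  have h2b : ((2 : ℝ) * ((c : ℝ) + 1)) ≠ 0 := by positivity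
  push_cast
  rw [div_mul_eq_mul_div, eq_div_iff h2b]
  linarith [key]


theorem stmt_1 (N : ℕ) (hN : 3 ≤ N) (lam C : ℝ) (hlam : 0 < lam) (hC : 0 < C)
    (u : EuclideanSpace ℝ (Fin N) → ℝ)
    (hu : ∀ x, u x = C * (lam / (lam ^ 2 + ‖x‖ ^ 2)) ^ ((N : ℝ) / 2)) :
    ∫ x : EuclideanSpace ℝ (Fin N), ‖gradient u x‖ ^ 2
      = (N : ℝ) ^ 2 * ((N : ℝ) - 2) / (4 * ((N : ℝ) + 1))
        * ∫ x : EuclideanSpace ℝ (Fin N), |u x| ^ 2 / ‖x‖ ^ 2 := by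
  obtain ⟨M, rfl⟩ : ∃ M, N = M + 3 := ⟨N - 3, by omega⟩
  have hE : True := trivial
  set K1 : ℝ := C ^ 2 * ((M + 3 : ℕ) : ℝ) ^ 2 * lam ^ (M + 3) with hK1
  set K2 : ℝ := C ^ 2 * lam ^ (M + 3) with hK2
  -- pointwise identities
  have hgrad : ∀ x : EuclideanSpace ℝ (Fin (M + 3)), ‖gradient u x‖ ^ 2
      = K1 * (‖x‖ ^ 2 * ((lam ^ 2 + ‖x‖ ^ 2)⁻¹) ^ (M + 5)) := by
    intro x
    have := grad_norm_sq hlam u hu x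
    simpa [hK1, show M + 3 + 2 = M + 5 from by omega] using this
  have husq : ∀ x : EuclideanSpace ℝ (Fin (M + 3)), |u x| ^ 2 / ‖x‖ ^ 2
      = K2 * (((lam ^ 2 + ‖x‖ ^ 2)⁻¹) ^ (M + 3) / ‖x‖ ^ 2) := by
    intro x
    have hsx : 0 < lam ^ 2 + ‖x‖ ^ 2 := den_pos' hlam _
    have h1 : |u x| ^ 2 = K2 * ((lam ^ 2 + ‖x‖ ^ 2)⁻¹) ^ (M + 3) := by
      rw [sq_abs, hu x, mul_pow]
      have h2 : ((lam / (lam ^ 2 + ‖x‖ ^ 2)) ^ (((M + 3 : ℕ) : ℝ) / 2)) ^ (2 : ℕ)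
          = (lam / (lam ^ 2 + ‖x‖ ^ 2)) ^ (M + 3 : ℕ) := by
        rw [← Real.rpow_natCast ((lam / (lam ^ 2 + ‖x‖ ^ 2)) ^ (((M + 3 : ℕ) : ℝ) / 2)) 2,
          ← Real.rpow_mul (div_nonneg hlam.le hsx.le),
          show ((M + 3 : ℕ) : ℝ) / 2 * (2 : ℕ) = ((M + 3 : ℕ) : ℝ) by push_cast; ring,
          Real.rpow_natCast]
      rw [h2, div_pow, div_eq_mul_inv, ← inv_pow, hK2]
      ring
    rw [h1, mul_div_assoc]
  -- polar coordinates
  have e1 : ∫ x : EuclideanSpace ℝ (Fin (M + 3)), ‖gradient u x‖ ^ 2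
      = ∫ x : EuclideanSpace ℝ (Fin (M + 3)), (fun r : ℝ => K1 * (r ^ 2 * ((lam ^ 2 + r ^ 2)⁻¹) ^ (M + 5))) ‖x‖ :=
    integral_congr_ae (.of_forall fun x => hgrad x)
  have e2 : ∫ x : EuclideanSpace ℝ (Fin (M + 3)), |u x| ^ 2 / ‖x‖ ^ 2
      = ∫ x : EuclideanSpace ℝ (Fin (M + 3)), (fun r : ℝ => K2 * (((lam ^ 2 + r ^ 2)⁻¹) ^ (M + 3) / r ^ 2)) ‖x‖ :=
    integral_congr_ae (.of_forall fun x => husq x)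
  haveI : Nontrivial (EuclideanSpace ℝ (Fin (M + 3))) :=
    ⟨0, EuclideanSpace.single (0 : Fin (M + 3)) (1 : ℝ), by
      intro h
      have := congrArg (fun v => v (0 : Fin (M + 3))) h.symm
      simp [EuclideanSpace.single] at this⟩
  rw [e1, e2,
    integral_fun_norm_addHaar (volume : Measure (EuclideanSpace ℝ (Fin (M + 3))))
      (fun r : ℝ => K1 * (r ^ 2 * ((lam ^ 2 + r ^ 2)⁻¹) ^ (M + 5))),
    integral_fun_norm_addHaar (volume : Measure (EuclideanSpace ℝ (Fin (M + 3))))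
      (fun r : ℝ => K2 * (((lam ^ 2 + r ^ 2)⁻¹) ^ (M + 3) / r ^ 2))]
  have hdim : Module.finrank ℝ (EuclideanSpace ℝ (Fin (M + 3))) = M + 3 := finrank_euclideanSpace_fin
  rw [hdim]
  set V : ℝ := (volume (Metric.ball (0 : EuclideanSpace ℝ (Fin (M + 3))) 1)).toReal with hV
  -- inner integrals
  set G1 : ℝ := ∫ y in Ioi (0:ℝ), y ^ (M + 4) * ((lam ^ 2 + y ^ 2)⁻¹) ^ (M + 5) with hG1
  set G2 : ℝ := ∫ y in Ioi (0:ℝ), y ^ (M + 2) * ((lam ^ 2 + y ^ 2)⁻¹) ^ (M + 4) with hG2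
  set G3 : ℝ := ∫ y in Ioi (0:ℝ), y ^ M * ((lam ^ 2 + y ^ 2)⁻¹) ^ (M + 3) with hG3
  have i1 : ∫ y in Ioi (0:ℝ), y ^ (M + 3 - 1) •
      (K1 * (y ^ 2 * ((lam ^ 2 + y ^ 2)⁻¹) ^ (M + 5))) = K1 * G1 := by
    rw [hG1, ← integral_const_mul]
    refine setIntegral_congr_fun measurableSet_Ioi fun y hy => ?_
    rw [smul_eq_mul, show M + 3 - 1 = M + 2 from by omega]
    ring
  have i2 : ∫ y in Ioi (0:ℝ), y ^ (M + 3 - 1) •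
      (K2 * (((lam ^ 2 + y ^ 2)⁻¹) ^ (M + 3) / y ^ 2)) = K2 * G3 := by
    rw [hG3, ← integral_const_mul]
    refine setIntegral_congr_fun measurableSet_Ioi fun y hy => ?_
    have hy0 : (y : ℝ) ≠ 0 := ne_of_gt hy
    rw [smul_eq_mul, show M + 3 - 1 = M + 2 from by omega]
    field_simp
    ring
  have ibp1 : G1 = ((M : ℝ) + 3) / (2 * ((M : ℝ) + 4)) * G2 := by
    have h := my_ibp hlam (M + 2) (M + 4) (by omega)
    rw [hG1, hG2]
    rw [show M + 2 + 2 = M + 4 from by omega, show M + 4 + 1 = M + 5 from by omega] at h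
    rw [h]
    push_cast
    ring
  have ibp2 : G2 = ((M : ℝ) + 1) / (2 * ((M : ℝ) + 3)) * G3 := by
    have h := my_ibp hlam M (M + 3) (by omega)
    rw [hG2, hG3]
    rw [show M + 2 = M + 2 from rfl, show M + 3 + 1 = M + 4 from by omega] at h
    rw [show (M:ℕ) + 2 = M + 2 from rfl] at h
    rw [h]
    push_cast
    ring
  rw [i1, i2, ibp1, ibp2]
  have h3 : ((M : ℝ) + 3) ≠ 0 := by positivity
  have h4 : ((M : ℝ) + 4) ≠ 0 := by positivity
  simp only [nsmul_eq_mul, smul_eq_mul, hK1, hK2]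
  push_cast
  field_simp
  ring
end

section
/- Let N ≥ 3, λ > 0, and C ∈ ℝ, and define u(x) = C (λ/(λ² + |x|²))^{N/2}. Then −Δu(x) + (N(2|x|² − Nλ²)/((|x|²+λ²)²)) u(x) = 0 for every x ∈ ℝ^N. -/
open MeasureTheory

/-- The Laplacian of `f : ℝ^N → ℝ` at `x`, as the sum of second partial derivatives
in the standard coordinate directions. -/
noncomputable def laplacian {N : ℕ} (f : EuclideanSpace ℝ (Fin N) → ℝ)
    (x : EuclideanSpace ℝ (Fin N)) : ℝ :=
  ∑ i : Fin N,
    fderiv ℝ (fun y => fderiv ℝ f y (EuclideanSpace.single i (1 : ℝ))) x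
      (EuclideanSpace.single i (1 : ℝ))

theorem stmt_6 (N : ℕ) (hN : 3 ≤ N) (lam : ℝ) (hlam : 0 < lam) (C : ℝ)
    (u : EuclideanSpace ℝ (Fin N) → ℝ)
    (hu : ∀ x, u x = C * (lam / (lam ^ 2 + ‖x‖ ^ 2)) ^ ((N : ℝ) / 2)) :
    ∀ x : EuclideanSpace ℝ (Fin N),
      -laplacian u x
        + (N : ℝ) * (2 * ‖x‖ ^ 2 - (N : ℝ) * lam ^ 2) / (‖x‖ ^ 2 + lam ^ 2) ^ 2 * u x = 0 := by
  set p : ℝ := (N : ℝ) / 2 with hp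
  set K : ℝ := C * lam ^ p with hK
  set f : ℝ → ℝ := fun t => K * (lam ^ 2 + t) ^ (-p) with hf
  set f1 : ℝ → ℝ := fun t => K * (-p) * (lam ^ 2 + t) ^ (-p - 1) with hf1
  set f2 : ℝ → ℝ := fun t => K * (-p) * (-p - 1) * (lam ^ 2 + t) ^ (-p - 2) with hf2
  set q : EuclideanSpace ℝ (Fin N) → ℝ := fun y => ∑ i, y i ^ 2 with hqdef
  set L : EuclideanSpace ℝ (Fin N) → (EuclideanSpace ℝ (Fin N) →L[ℝ] ℝ) := fun y => ∑ i, (2 * y i) • EuclideanSpace.proj i with hL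
  have hqpos : ∀ y : EuclideanSpace ℝ (Fin N), 0 ≤ q y := by
    intro y; exact Finset.sum_nonneg fun i _ => sq_nonneg _
  have hs : ∀ t : ℝ, 0 ≤ t → 0 < lam ^ 2 + t := by
    intro t ht; positivity
  have hnorm : ∀ y : EuclideanSpace ℝ (Fin N), ‖y‖ ^ 2 = q y := by
    intro y
    rw [EuclideanSpace.norm_eq, Real.sq_sqrt (by positivity)]
    simp [hqdef, Real.norm_eq_abs, sq_abs]
  -- derivative of f
  have hder : ∀ r : ℝ, ∀ c : ℝ, ∀ t : ℝ, 0 ≤ t →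
      HasDerivAt (fun t => c * (lam ^ 2 + t) ^ r) (c * r * (lam ^ 2 + t) ^ (r - 1)) t := by
    intro r c t ht
    have h1 : HasDerivAt (fun t : ℝ => lam ^ 2 + t) 1 t := (hasDerivAt_id t).const_add _
    have h2 := (Real.hasDerivAt_rpow_const (x := lam ^ 2 + t) (p := r)
      (Or.inl (ne_of_gt (hs t ht)))).comp t h1
    have h3 := h2.const_mul c
    simpa [mul_comm, mul_assoc, mul_left_comm] using h3
  have hDf : ∀ t : ℝ, 0 ≤ t → HasDerivAt f (f1 t) t := by
    intro t ht
    have := hder (-p) K t ht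
    simpa [hf, hf1] using this
  have hDf1 : ∀ t : ℝ, 0 ≤ t → HasDerivAt f1 (f2 t) t := by
    intro t ht
    have := hder (-p - 1) (K * (-p)) t ht
    have e : -p - 1 - 1 = -p - 2 := by ring
    simpa [hf1, hf2, e] using this
  -- derivative of q
  have hDq : ∀ y : EuclideanSpace ℝ (Fin N), HasFDerivAt q (L y) y := by
    intro y
    have : ∀ i : Fin N, HasFDerivAt (fun z : EuclideanSpace ℝ (Fin N) => z i ^ 2)
        ((2 * y i) • EuclideanSpace.proj (𝕜 := ℝ) i) y := by
      intro i
      have h := (EuclideanSpace.proj (𝕜 := ℝ) i).hasFDerivAt (x := y)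
      have h2 := h.fun_mul h
      have e : (2 * y i) • EuclideanSpace.proj (𝕜 := ℝ) i
          = y i • EuclideanSpace.proj (𝕜 := ℝ) i + y i • EuclideanSpace.proj (𝕜 := ℝ) i := by
        rw [mul_smul, two_smul]
      rw [e]
      simpa [pow_two] using h2
    simpa [hL] using HasFDerivAt.fun_sum (fun i _ => this i)
  have hLapply : ∀ (y : EuclideanSpace ℝ (Fin N)) (i : Fin N), L y (EuclideanSpace.single i (1 : ℝ)) = 2 * y i := by
    intro y i
    simp [hL, ContinuousLinearMap.sum_apply, EuclideanSpace.single_apply, PiLp.proj_apply,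
      mul_ite, Finset.sum_ite_eq, mul_comm]
  -- u = f ∘ q
  have huq : ∀ y : EuclideanSpace ℝ (Fin N), u y = f (q y) := by
    intro y
    rw [hu, hnorm]
    simp only [hf]
    have h1 : (lam / (lam ^ 2 + q y)) ^ p
        = lam ^ p / (lam ^ 2 + q y) ^ p := Real.div_rpow hlam.le (hs _ (hqpos y)).le p
    rw [h1, Real.rpow_neg (hs _ (hqpos y)).le, hK]
    ring
  have hufun : u = fun y => f (q y) := funext huq
  -- first derivative of u
  have hDu : ∀ y : EuclideanSpace ℝ (Fin N), HasFDerivAt u (f1 (q y) • L y) y := by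
    intro y
    rw [hufun]
    exact (hDf (q y) (hqpos y)).comp_hasFDerivAt y (hDq y)
  have hfd : ∀ (y : EuclideanSpace ℝ (Fin N)) (i : Fin N),
      fderiv ℝ u y (EuclideanSpace.single i (1 : ℝ)) = f1 (q y) * (2 * y i) := by
    intro y i
    rw [(hDu y).fderiv]
    simp [hLapply]
  intro x
  -- second derivatives
  have hsecond : ∀ i : Fin N,
      fderiv ℝ (fun y => fderiv ℝ u y (EuclideanSpace.single i (1 : ℝ))) x
        (EuclideanSpace.single i (1 : ℝ))
      = f1 (q x) * 2 + 2 * x i * (f2 (q x) * (2 * x i)) := by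
    intro i
    have hfun : (fun y => fderiv ℝ u y (EuclideanSpace.single i (1 : ℝ)))
        = fun y => f1 (q y) * (2 * y i) := funext fun y => hfd y i
    rw [hfun]
    have hc : HasFDerivAt (fun y : EuclideanSpace ℝ (Fin N) => f1 (q y)) (f2 (q x) • L x) x :=
      (hDf1 (q x) (hqpos x)).comp_hasFDerivAt x (hDq x)
    have hd : HasFDerivAt (fun y : EuclideanSpace ℝ (Fin N) => 2 * y i)
        ((2 : ℝ) • EuclideanSpace.proj (𝕜 := ℝ) i) x :=
      ((EuclideanSpace.proj (𝕜 := ℝ) i).hasFDerivAt (x := x)).const_mul 2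
    have hmul := hc.fun_mul hd
    rw [hmul.fderiv]
    simp [hLapply, EuclideanSpace.single_apply, mul_comm, mul_assoc, mul_left_comm]
  -- compute laplacian
  have hlap : laplacian u x = 2 * N * f1 (q x) + 4 * q x * f2 (q x) := by
    unfold laplacian
    rw [Finset.sum_congr rfl fun i _ => hsecond i]
    rw [Finset.sum_add_distrib, Finset.sum_const, Finset.card_univ, Fintype.card_fin]
    have e1 : ∀ i : Fin N, 2 * x i * (f2 (q x) * (2 * x i))
        = x i ^ 2 * (4 * f2 (q x)) := fun i => by ring
    have : ∑ i : Fin N, 2 * x i * (f2 (q x) * (2 * x i))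
        = 4 * q x * f2 (q x) := by
      rw [Finset.sum_congr rfl fun i _ => e1 i, ← Finset.sum_mul]
      have hqx : q x = ∑ i, x i ^ 2 := rfl
      rw [← hqx]; ring
    rw [this]
    push_cast
    ring
  -- final algebra
  rw [hlap, huq x, hnorm x]
  set t := q x with ht
  have hspos := hs t (hqpos x)
  set s : ℝ := lam ^ 2 + t with hsdef
  have hsne : s ≠ 0 := ne_of_gt hspos
  have hA1 : s ^ (-p - 1) = s ^ (-p) / s := by
    rw [Real.rpow_sub hspos, Real.rpow_one]
  have hA2 : s ^ (-p - 2) = s ^ (-p) / s ^ 2 := by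
    rw [show (-p - 2 : ℝ) = -p - (2:ℕ) by push_cast; ring,
      Real.rpow_sub hspos, Real.rpow_natCast]
  rw [hf1, hf2, hf]
  simp only
  rw [hA1, hA2]
  have hcomm : t + lam ^ 2 = s := by rw [hsdef]; ring
  rw [hcomm, hp]
  field_simp
  ring
end
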